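/- arXiv:math/9901145 — 2 statements merged into one kernel-verified Lean document; each statement's English description precedes it below -/
import Mathlib

section
/- Let L be a Lie algebra over R_k (free as a module) with residue-field reduction L̄. The cohomology class [J] ∈ H³(L̄, ad) of the Jacobiator of any bracket algebra lift of L over R_{k+1} is independent of the choice of bracket algebra lift. -/
open Pointwise

/-- `Rmod R π m` is the quotient ring `R/π^m R`. -/
abbrev Rmod (R : Type) [CommRing R] (π : R) (m : ℕ) : Type :=
  R ⧸ Ideal.span {π ^ m}

section Setup

variable (R : Type) [CommRing R] (π : R) (k : ℕ)
variable (B : Type) [AddCommGroup B] [Module (Rmod R π (k + 1)) B]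

/-- The image of `π` in `R_{k+1}`. -/
noncomputable abbrev pbar : Rmod R π (k + 1) := Ideal.Quotient.mk _ π

/-- The submodule `π^k B` of `B`. -/
noncomputable abbrev pikB : Submodule (Rmod R π (k + 1)) B :=
  (pbar R π k) ^ k • (⊤ : Submodule (Rmod R π (k + 1)) B)

/-- The submodule `π B` of `B`. -/
noncomputable abbrev piB : Submodule (Rmod R π (k + 1)) B :=
  (pbar R π k) • (⊤ : Submodule (Rmod R π (k + 1)) B)

/-- `L = B/π^k B`, the reduction of `B` to a module over `R_k`. -/
noncomputable abbrev Lred := B ⧸ pikB R π k B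

/-- `L̄ = B/πB`, the reduction of `B` to a vector space over the residue field. -/
noncomputable abbrev Lbar := B ⧸ piB R π k B

/-- The reduction map `mod : B → L = B/π^k B`. -/
noncomputable abbrev modk : B →ₗ[Rmod R π (k + 1)] Lred R π k B :=
  (pikB R π k B).mkQ

/-- The reduction map `λ : B → L̄ = B/πB`. -/
noncomputable abbrev lam : B →ₗ[Rmod R π (k + 1)] Lbar R π k B :=
  (piB R π k B).mkQ

/-- `ψ : L̄ → B`, the map sending `x mod πB` to `π^k x`; its (corestriction to `π^k B`)
is the inverse of the canonical isomorphism `χ : π^k B → L̄`. -/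
noncomputable def psi : Lbar R π k B →ₗ[Rmod R π (k + 1)] B :=
  Submodule.liftQ _ ((pbar R π k) ^ k • (LinearMap.id : B →ₗ[Rmod R π (k + 1)] B))
    (by
      intro x hx
      rw [← SetLike.mem_coe, Submodule.coe_pointwise_smul, Set.mem_smul_set] at hx
      obtain ⟨y, -, rfl⟩ := hx
      have h0 : (pbar R π k) ^ k * pbar R π k = 0 := by
        rw [← pow_succ, ← map_pow, Ideal.Quotient.eq_zero_iff_mem]
        exact Ideal.mem_span_singleton_self _
      simp only [LinearMap.mem_ker, LinearMap.smul_apply, LinearMap.id_apply, smul_smul]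
      rw [h0, zero_smul])

@[simp] theorem psi_apply (x : B) :
    psi R π k B (lam R π k B x) = ((pbar R π k) ^ k) • x := rfl

end Setup

section Aux

variable (R : Type) [CommRing R] (π : R) (k : ℕ)
variable (B : Type) [AddCommGroup B] [Module (Rmod R π (k + 1)) B]

theorem mem_pikB {x : B} : x ∈ pikB R π k B ↔ ∃ w : B, x = (pbar R π k) ^ k • w := by
  constructor
  · intro hx
    rw [← SetLike.mem_coe, Submodule.coe_pointwise_smul, Set.mem_smul_set] at hx
    obtain ⟨y, -, rfl⟩ := hx
    exact ⟨y, rfl⟩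
  · rintro ⟨w, rfl⟩
    exact Submodule.smul_mem_pointwise_smul w _ _ trivial

theorem mem_piB {x : B} : x ∈ piB R π k B ↔ ∃ w : B, x = (pbar R π k) • w := by
  constructor
  · intro hx
    rw [← SetLike.mem_coe, Submodule.coe_pointwise_smul, Set.mem_smul_set] at hx
    obtain ⟨y, -, rfl⟩ := hx
    exact ⟨y, rfl⟩
  · rintro ⟨w, rfl⟩
    exact Submodule.smul_mem_pointwise_smul w _ _ trivial

theorem pbar_pow_succ : (pbar R π k) ^ (k + 1) = 0 := by
  rw [← map_pow, Ideal.Quotient.eq_zero_iff_mem]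
  exact Ideal.mem_span_singleton_self _

theorem pk_mul_eq_zero [IsDomain R] (hπ : π ≠ 0) (r : Rmod R π (k + 1))
    (h : (pbar R π k) ^ k * r = 0) : ∃ s, r = pbar R π k * s := by
  obtain ⟨r', rfl⟩ := Ideal.Quotient.mk_surjective r
  rw [← map_pow, ← map_mul, Ideal.Quotient.eq_zero_iff_mem, Ideal.mem_span_singleton] at h
  obtain ⟨a, ha⟩ := h
  refine ⟨Ideal.Quotient.mk _ a, ?_⟩
  rw [← map_mul]
  congr 1
  have : π ^ k * r' = π ^ k * (π * a) := by rw [ha]; ring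
  exact mul_left_cancel₀ (pow_ne_zero k hπ) this

theorem psi_inj [IsDomain R] (hπ : π ≠ 0) [Module.Free (Rmod R π (k + 1)) B]
    [Module.Finite (Rmod R π (k + 1)) B] : Function.Injective (psi R π k B) := by
  rw [← LinearMap.ker_eq_bot, LinearMap.ker_eq_bot']
  intro m hm
  obtain ⟨b, rfl⟩ := Submodule.mkQ_surjective _ m
  have hb : (pbar R π k) ^ k • b = 0 := hm
  set S := Rmod R π (k + 1)
  let bb := Module.Free.chooseBasis S B
  have hcoord : ∀ i, ∃ s, bb.repr b i = pbar R π k * s := by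
    intro i
    apply pk_mul_eq_zero R π k hπ
    have : bb.repr ((pbar R π k) ^ k • b) i = 0 := by rw [hb]; simp
    simpa [Finsupp.smul_apply, smul_eq_mul] using this
  choose s hs using hcoord
  have hbeq : b = pbar R π k • (∑ i, s i • bb i) := by
    conv_lhs => rw [← bb.sum_repr b]
    rw [Finset.smul_sum]
    refine Finset.sum_congr rfl fun i _ => ?_
    rw [hs i, mul_smul]
  rw [show ((piB R π k B).mkQ b : Lbar R π k B) = 0 ↔ b ∈ piB R π k B from
    Submodule.Quotient.mk_eq_zero _]
  rw [mem_piB]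
  exact ⟨_, hbeq⟩

end Aux

set_option maxHeartbeats 2000000 in
/-- The cohomology class `[J] ∈ H³(L̄, ad)` of the Jacobiator of a bracket
algebra lift of the Lie algebra `L` over `R_{k+1}` does not depend on the choice of
bracket algebra lift: the 3-cocycles induced by any two lifts differ by the
Chevalley–Eilenberg coboundary of an alternating 2-form on `L̄`. -/
theorem stmt_8 (R : Type) [CommRing R] [IsDomain R] [IsDiscreteValuationRing R]
    (π : R) (hπ : Irreducible π) (k : ℕ) (hk : 1 ≤ k)
    (B : Type) [AddCommGroup B] [Module (Rmod R π (k + 1)) B]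
    [Module.Free (Rmod R π (k + 1)) B] [Module.Finite (Rmod R π (k + 1)) B]
    (brL : Lred R π k B →ₗ[Rmod R π (k + 1)] Lred R π k B →ₗ[Rmod R π (k + 1)] Lred R π k B)
    (hjacL : ∀ x y z : Lred R π k B, brL (brL x y) z + brL (brL y z) x + brL (brL z x) y = 0)
    (br1 br2 : B →ₗ[Rmod R π (k + 1)] B →ₗ[Rmod R π (k + 1)] B)
    (halt1 : ∀ v, br1 v v = 0) (halt2 : ∀ v, br2 v v = 0)
    (hlift1 : ∀ x y : B, modk R π k B (br1 x y) = brL (modk R π k B x) (modk R π k B y))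
    (hlift2 : ∀ x y : B, modk R π k B (br2 x y) = brL (modk R π k B x) (modk R π k B y))
    (brb : Lbar R π k B →ₗ[Rmod R π (k + 1)] Lbar R π k B →ₗ[Rmod R π (k + 1)] Lbar R π k B)
    (hbrb : ∀ x y : B, lam R π k B (br1 x y) = brb (lam R π k B x) (lam R π k B y))
    (J1 J2 : Lbar R π k B →ₗ[Rmod R π (k + 1)] Lbar R π k B →ₗ[Rmod R π (k + 1)]
      Lbar R π k B →ₗ[Rmod R π (k + 1)] Lbar R π k B)
    (hJ1 : ∀ x y z : B, psi R π k B (J1 (lam R π k B x) (lam R π k B y) (lam R π k B z)) =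
      br1 (br1 x y) z + br1 (br1 y z) x + br1 (br1 z x) y)
    (hJ2 : ∀ x y z : B, psi R π k B (J2 (lam R π k B x) (lam R π k B y) (lam R π k B z)) =
      br2 (br2 x y) z + br2 (br2 y z) x + br2 (br2 z x) y)
    :
    ∃ form : Lbar R π k B →ₗ[Rmod R π (k + 1)] Lbar R π k B →ₗ[Rmod R π (k + 1)] Lbar R π k B,
      (∀ v, form v v = 0) ∧
      ∀ x y z : Lbar R π k B,
        J1 x y z - J2 x y z =
          brb x (form y z) - brb y (form x z) + brb z (form x y)
            - form (brb x y) z + form (brb x z) y - form (brb y z) x := by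
  classical
  set S := Rmod R π (k + 1) with hS
  set p : S := pbar R π k with hp
  have hπ0 : π ≠ 0 := hπ.ne_zero
  have hinj : Function.Injective (psi R π k B) := psi_inj R π k B hπ0
  have hpk1 : p ^ k * p = 0 := by
    rw [← pow_succ, hp, pbar_pow_succ]
  have h2k : p ^ k * p ^ k = 0 := by
    have hkk : k + k = (k + 1) + (k - 1) := by omega
    rw [← pow_add, hkk, pow_add, hp, pbar_pow_succ, zero_mul]
  -- the difference of the two lifts lands in π^k B
  have hEmem : ∀ x y : B, br2 x y - br1 x y ∈ pikB R π k B := by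
    intro x y
    have h0 : modk R π k B (br2 x y - br1 x y) = 0 := by
      rw [map_sub, hlift1, hlift2, sub_self]
    exact (Submodule.Quotient.mk_eq_zero _).1 h0
  have hE : ∀ x y : B, ∃ w : B, br2 x y - br1 x y = p ^ k • w := by
    intro x y
    exact (mem_pikB R π k B).1 (hEmem x y)
  -- range of psi is π^k B
  have hrange : pikB R π k B ≤ LinearMap.range (psi R π k B) := by
    intro v hv
    obtain ⟨w, rfl⟩ := (mem_pikB R π k B).1 hv
    exact ⟨lam R π k B w, rfl⟩
  let e := LinearEquiv.ofInjective (psi R π k B) hinj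
  let χ : pikB R π k B →ₗ[S] Lbar R π k B :=
    e.symm.toLinearMap ∘ₗ Submodule.inclusion hrange
  have hχ : ∀ m : pikB R π k B, psi R π k B (χ m) = (m : B) := by
    intro m
    have h1 : ∀ yy : LinearMap.range (psi R π k B), psi R π k B (e.symm yy) = (yy : B) := by
      intro yy
      conv_rhs => rw [← e.apply_symm_apply yy]
      exact (LinearEquiv.ofInjective_apply _ _).symm
    exact h1 _
  -- the bilinear map (x,y) ↦ br2 x y - br1 x y, corestricted to π^k B
  let Dc : B →ₗ[S] B →ₗ[S] pikB R π k B :=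
    { toFun := fun x => LinearMap.codRestrict _ ((br2 : B →ₗ[S] B →ₗ[S] B) x - br1 x)
        (fun y => hEmem x y)
      map_add' := fun x x' => by
        ext y
        simp [LinearMap.codRestrict_apply]
        abel
      map_smul' := fun r x => by
        ext y
        simp [LinearMap.codRestrict_apply, smul_sub] }
  let form0 : B →ₗ[S] B →ₗ[S] Lbar R π k B := Dc.compr₂ χ
  have hform0 : ∀ x y : B, psi R π k B (form0 x y) = br2 x y - br1 x y := by
    intro x y
    show psi R π k B (χ (Dc x y)) = _
    rw [hχ]
    rfl
  have hv1 : ∀ x ∈ piB R π k B, ∀ y : B, form0 x y = 0 := by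
    intro x hx y
    obtain ⟨w, rfl⟩ := (mem_piB R π k B).1 hx
    obtain ⟨c, hc⟩ := hE w y
    apply hinj
    rw [hform0, map_zero]
    have h1 : br2 (p • w) y - br1 (p • w) y = p • (br2 w y - br1 w y) := by
      rw [map_smul, map_smul, LinearMap.smul_apply, LinearMap.smul_apply, smul_sub]
    rw [h1, hc, smul_smul, mul_comm, hpk1, zero_smul]
  have hv2 : ∀ (x : B), ∀ y ∈ piB R π k B, form0 x y = 0 := by
    intro x y hy
    obtain ⟨w, rfl⟩ := (mem_piB R π k B).1 hy
    obtain ⟨c, hc⟩ := hE x w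
    apply hinj
    rw [hform0, map_zero]
    have h1 : br2 x (p • w) - br1 x (p • w) = p • (br2 x w - br1 x w) := by
      rw [map_smul, map_smul, smul_sub]
    rw [h1, hc, smul_smul, mul_comm, hpk1, zero_smul]
  let F0 : B →ₗ[S] Lbar R π k B →ₗ[S] Lbar R π k B :=
    { toFun := fun x => Submodule.liftQ (piB R π k B) (form0 x) (fun y hy => by
        rw [LinearMap.mem_ker]; exact hv2 x y hy)
      map_add' := fun x x' => by
        refine LinearMap.ext fun m => ?_
        obtain ⟨y, rfl⟩ := Submodule.mkQ_surjective _ m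
        simp [Submodule.liftQ_apply, map_add]
      map_smul' := fun r x => by
        refine LinearMap.ext fun m => ?_
        obtain ⟨y, rfl⟩ := Submodule.mkQ_surjective _ m
        simp [Submodule.liftQ_apply, map_smul] }
  have hF0ker : ∀ x ∈ piB R π k B, F0 x = 0 := by
    intro x hx
    refine LinearMap.ext fun m => ?_
    obtain ⟨y, rfl⟩ := Submodule.mkQ_surjective _ m
    show form0 x y = 0
    exact hv1 x hx y
  set form : Lbar R π k B →ₗ[S] Lbar R π k B →ₗ[S] Lbar R π k B :=
    Submodule.liftQ (piB R π k B) F0 (fun x hx => by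
      rw [LinearMap.mem_ker]; exact hF0ker x hx) with hformdef
  have hψform : ∀ x y : B,
      psi R π k B (form (lam R π k B x) (lam R π k B y)) = br2 x y - br1 x y :=
    fun x y => hform0 x y
  refine ⟨form, ?_, ?_⟩
  · -- alternating
    intro v
    obtain ⟨x, rfl⟩ := Submodule.mkQ_surjective _ v
    apply hinj
    rw [map_zero, hψform, halt1, halt2, sub_self]
  · -- antisymmetry of the brackets
    have a1 : ∀ u v : B, br1 u v = - br1 v u := by
      intro u v
      have h0 := halt1 (u + v)
      simp only [map_add, LinearMap.add_apply, halt1 u, halt1 v, zero_add, add_zero] at h0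
      exact eq_neg_of_add_eq_zero_right h0
    have a2 : ∀ u v : B, br2 u v = - br2 v u := by
      intro u v
      have h0 := halt2 (u + v)
      simp only [map_add, LinearMap.add_apply, halt2 u, halt2 v, zero_add, add_zero] at h0
      exact eq_neg_of_add_eq_zero_right h0
    -- expansion of the Jacobiator difference
    have hexp : ∀ u v w : B,
        br2 (br2 u v) w = br2 (br1 u v) w + br1 (br2 u v - br1 u v) w := by
      intro u v w
      obtain ⟨c, hc⟩ := hE u v
      have h1 : br2 (br2 u v) w = br2 (br1 u v) w + br2 (br2 u v - br1 u v) w := by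
        conv_lhs => rw [show br2 u v = br1 u v + (br2 u v - br1 u v) from by abel]
        rw [map_add, LinearMap.add_apply]
      rw [h1]
      congr 1
      rw [hc, map_smul, map_smul, LinearMap.smul_apply, LinearMap.smul_apply]
      obtain ⟨d, hd⟩ := hE c w
      have h2 : p ^ k • br2 c w - p ^ k • br1 c w = 0 := by
        rw [← smul_sub, hd, smul_smul, h2k, zero_smul]
      have h3 : p ^ k • br2 c w = p ^ k • br1 c w := by
        have := sub_eq_zero.mp h2
        exact this
      exact h3
    have hbr_form : ∀ u v w : B,
        psi R π k B (brb (lam R π k B u) (form (lam R π k B v) (lam R π k B w))) =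
          br1 u (br2 v w - br1 v w) := by
      intro u v w
      obtain ⟨d, hd⟩ := hE v w
      have h1 : form (lam R π k B v) (lam R π k B w) = lam R π k B d := by
        apply hinj
        rw [hψform, hd, psi_apply]
      rw [h1, ← hbrb, psi_apply, ← map_smul, ← hd]
    have hform_br : ∀ u v w : B,
        psi R π k B (form (brb (lam R π k B u) (lam R π k B v)) (lam R π k B w)) =
          br2 (br1 u v) w - br1 (br1 u v) w := by
      intro u v w
      rw [← hbrb, hψform]
    intro x y z
    obtain ⟨a, rfl⟩ := Submodule.mkQ_surjective _ x
    obtain ⟨b, rfl⟩ := Submodule.mkQ_surjective _ y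
    obtain ⟨c, rfl⟩ := Submodule.mkQ_surjective _ z
    apply hinj
    rw [map_sub, map_sub, map_add, map_sub, map_add, map_sub,
      hJ1 a b c, hJ2 a b c, hbr_form a b c, hbr_form b a c, hbr_form c a b,
      hform_br a b c, hform_br a c b, hform_br b c a,
      hexp a b c, hexp b c a, hexp c a b, a1 c a, a2 c a]
    simp only [map_neg, map_sub, map_add, LinearMap.neg_apply, LinearMap.sub_apply,
      LinearMap.add_apply]
    rw [a1 a (br2 b c), a1 a (br1 b c), a1 b (br2 a c), a1 b (br1 a c),
      a1 c (br2 a b), a1 c (br1 a b)]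
    abel
end

section
/- Let L be a Lie algebra over R_k, free as an R_k-module, with residue-field reduction L̄. Then L admits a lift to a Lie algebra over R_{k+1} (a free R_{k+1}-Lie algebra with a surjective bracket-preserving map onto L inducing an isomorphism mod π^k) if and only if the obstruction class [J] ∈ H³(L̄, ad) vanishes. -/
open Pointwise

section Helpers

theorem aux_antisym {S M N : Type*} [CommRing S] [AddCommGroup M] [Module S M]
    [AddCommGroup N] [Module S N] (f : M →ₗ[S] M →ₗ[S] N) (h : ∀ v, f v v = 0)
    (x y : M) : f x y = - f y x := by
  have h2 := h (x + y)
  simp only [map_add, LinearMap.add_apply, h x, h y, zero_add, add_zero] at h2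
  rw [add_comm] at h2
  exact eq_neg_of_add_eq_zero_left h2

variable (R : Type) [CommRing R] (π : R) (k : ℕ)
variable (B : Type) [AddCommGroup B] [Module (Rmod R π (k + 1)) B]

theorem pbar_succ_zero : (pbar R π k) ^ k * pbar R π k = 0 := by
  rw [← pow_succ, ← map_pow, Ideal.Quotient.eq_zero_iff_mem]
  exact Ideal.mem_span_singleton_self _

theorem kill_pikB (w : B) (hw : w ∈ pikB R π k B) : pbar R π k • w = 0 := by
  rw [← SetLike.mem_coe, Submodule.coe_pointwise_smul, Set.mem_smul_set] at hw
  obtain ⟨m, -, rfl⟩ := hw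
  rw [smul_smul, mul_comm, pbar_succ_zero, zero_smul]

theorem pikB_le_piB (hk : 1 ≤ k) (w : B) (hw : w ∈ pikB R π k B) : w ∈ piB R π k B := by
  rw [← SetLike.mem_coe, Submodule.coe_pointwise_smul, Set.mem_smul_set] at hw
  obtain ⟨m, -, rfl⟩ := hw
  have hpow : (pbar R π k) ^ k = pbar R π k * (pbar R π k) ^ (k - 1) := by
    rw [← pow_succ', Nat.sub_add_cancel hk]
  rw [hpow, mul_smul]
  exact Submodule.smul_mem_pointwise_smul _ _ _ Submodule.mem_top

theorem psi_mem (w : Lbar R π k B) : psi R π k B w ∈ pikB R π k B := by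
  obtain ⟨x, rfl⟩ := Submodule.mkQ_surjective _ w
  exact Submodule.smul_mem_pointwise_smul _ _ _ Submodule.mem_top

theorem scalar_div (hπ : Irreducible π) [IsDomain R] (c : Rmod R π (k + 1))
    (hc : (pbar R π k) ^ k * c = 0) : ∃ d, c = pbar R π k * d := by
  obtain ⟨a, rfl⟩ := Ideal.Quotient.mk_surjective c
  rw [← map_pow, ← map_mul, Ideal.Quotient.eq_zero_iff_mem, Ideal.mem_span_singleton] at hc
  obtain ⟨t, ht⟩ := hc
  refine ⟨Ideal.Quotient.mk _ t, ?_⟩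
  rw [← map_mul]
  congr 1
  have hπk : (π : R) ^ k ≠ 0 := pow_ne_zero _ hπ.ne_zero
  apply mul_left_cancel₀ hπk
  rw [ht, pow_succ]; ring

theorem psi_injective (hπ : Irreducible π) [IsDomain R]
    [Module.Free (Rmod R π (k + 1)) B] [Module.Finite (Rmod R π (k + 1)) B] :
    Function.Injective (psi R π k B) := by
  rw [injective_iff_map_eq_zero]
  intro w hw
  obtain ⟨x, rfl⟩ := Submodule.mkQ_surjective _ w
  rw [psi_apply] at hw
  rw [Submodule.mkQ_apply, Submodule.Quotient.mk_eq_zero]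
  set b := Module.Free.chooseBasis (Rmod R π (k + 1)) B
  have hcoef : ∀ i, (pbar R π k) ^ k * b.repr x i = 0 := by
    intro i
    have : b.repr ((pbar R π k) ^ k • x) i = 0 := by rw [hw]; simp
    simpa [map_smul, smul_eq_mul] using this
  choose d hd using fun i => scalar_div R π k hπ _ (hcoef i)
  have hx : x = pbar R π k • (∑ i, d i • b i) := by
    conv_lhs => rw [← b.sum_repr x]
    rw [Finset.smul_sum]
    refine Finset.sum_congr rfl fun i _ => ?_
    rw [hd i, mul_smul]
  rw [hx]
  exact Submodule.smul_mem_pointwise_smul _ _ _ Submodule.mem_top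

noncomputable def biCodRestrict {S M C : Type*} [CommRing S] [AddCommGroup M] [Module S M]
    [AddCommGroup C] [Module S C] (p : Submodule S C) (g : M →ₗ[S] M →ₗ[S] C)
    (h : ∀ x y, g x y ∈ p) : M →ₗ[S] M →ₗ[S] p where
  toFun x := (g x).codRestrict p (h x)
  map_add' a b := by ext y; simp
  map_smul' r a := by ext y; simp

@[simp] theorem biCodRestrict_apply {S M C : Type*} [CommRing S] [AddCommGroup M] [Module S M]
    [AddCommGroup C] [Module S C] (p : Submodule S C) (g : M →ₗ[S] M →ₗ[S] C)
    (h : ∀ x y, g x y ∈ p) (x y : M) : (biCodRestrict p g h x y : C) = g x y := rfl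

noncomputable def biDescend {S M C : Type*} [CommRing S] [AddCommGroup M] [Module S M]
    [AddCommGroup C] [Module S C] (p : Submodule S M) (g : M →ₗ[S] M →ₗ[S] C)
    (h1 : ∀ x ∈ p, g x = 0) (h2 : ∀ x, ∀ y ∈ p, g x y = 0) :
    (M ⧸ p) →ₗ[S] (M ⧸ p) →ₗ[S] C :=
  Submodule.liftQ p
    { toFun := fun x => Submodule.liftQ p (g x)
        (fun y hy => by simp [LinearMap.mem_ker, h2 x y hy])
      map_add' := fun a b => by apply Submodule.linearMap_qext; ext y; simp
      map_smul' := fun r a => by apply Submodule.linearMap_qext; ext y; simp }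
    (by intro x hx
        rw [LinearMap.mem_ker]
        apply Submodule.linearMap_qext
        ext y
        simp [h1 x hx])

@[simp] theorem biDescend_apply {S M C : Type*} [CommRing S] [AddCommGroup M] [Module S M]
    [AddCommGroup C] [Module S C] (p : Submodule S M) (g : M →ₗ[S] M →ₗ[S] C)
    (h1 : ∀ x ∈ p, g x = 0) (h2 : ∀ x, ∀ y ∈ p, g x y = 0) (x y : M) :
    biDescend p g h1 h2 (p.mkQ x) (p.mkQ y) = g x y := rfl

noncomputable def chiEquiv (hπ : Irreducible π) [IsDomain R]
    [Module.Free (Rmod R π (k + 1)) B] [Module.Finite (Rmod R π (k + 1)) B] :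
    Lbar R π k B ≃ₗ[Rmod R π (k + 1)] ↥(pikB R π k B) :=
  LinearEquiv.ofBijective ((psi R π k B).codRestrict _ (psi_mem R π k B))
    ⟨fun a b hab => psi_injective R π k B hπ (congrArg Subtype.val hab),
     by rintro ⟨v, hv⟩
        rw [← SetLike.mem_coe, Submodule.coe_pointwise_smul, Set.mem_smul_set] at hv
        obtain ⟨m, -, rfl⟩ := hv
        exact ⟨lam R π k B m, rfl⟩⟩

theorem chiEquiv_symm_val (hπ : Irreducible π) [IsDomain R]
    [Module.Free (Rmod R π (k + 1)) B] [Module.Finite (Rmod R π (k + 1)) B]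
    (t : ↥(pikB R π k B)) :
    psi R π k B ((chiEquiv R π k B hπ).symm t) = t.val := by
  have h : ∀ w, psi R π k B w = ((chiEquiv R π k B hπ) w).val := fun _ => rfl
  rw [h, LinearEquiv.apply_symm_apply]

end Helpers

set_option maxHeartbeats 1600000 in
/-- The Lie algebra `L = B/π^k B` over `R_k` admits a Lie algebra lift over
`R_{k+1}` (an alternating bracket on the free module `B` satisfying the Jacobi identity
and reducing mod `π^k` to the bracket of `L`) if and only if the obstruction class
`[J] ∈ H³(L̄, ad)` vanishes, i.e. the Jacobiator 3-cocycle `J` of a bracket algebra lift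
is a Chevalley–Eilenberg coboundary. -/
theorem stmt_9 (R : Type) [CommRing R] [IsDomain R] [IsDiscreteValuationRing R]
    (π : R) (hπ : Irreducible π) (k : ℕ) (hk : 1 ≤ k)
    (B : Type) [AddCommGroup B] [Module (Rmod R π (k + 1)) B]
    [Module.Free (Rmod R π (k + 1)) B] [Module.Finite (Rmod R π (k + 1)) B]
    (brL : Lred R π k B →ₗ[Rmod R π (k + 1)] Lred R π k B →ₗ[Rmod R π (k + 1)] Lred R π k B)
    (haltL : ∀ v, brL v v = 0)
    (hjacL : ∀ x y z : Lred R π k B, brL (brL x y) z + brL (brL y z) x + brL (brL z x) y = 0)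
    (br : B →ₗ[Rmod R π (k + 1)] B →ₗ[Rmod R π (k + 1)] B)
    (halt : ∀ v, br v v = 0)
    (hlift : ∀ x y : B, modk R π k B (br x y) = brL (modk R π k B x) (modk R π k B y))
    (brb : Lbar R π k B →ₗ[Rmod R π (k + 1)] Lbar R π k B →ₗ[Rmod R π (k + 1)] Lbar R π k B)
    (hbrb : ∀ x y : B, lam R π k B (br x y) = brb (lam R π k B x) (lam R π k B y))
    (J : Lbar R π k B →ₗ[Rmod R π (k + 1)] Lbar R π k B →ₗ[Rmod R π (k + 1)]
      Lbar R π k B →ₗ[Rmod R π (k + 1)] Lbar R π k B)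
    (hJ : ∀ x y z : B, psi R π k B (J (lam R π k B x) (lam R π k B y) (lam R π k B z)) =
      br (br x y) z + br (br y z) x + br (br z x) y)
    :
    (∃ br' : B →ₗ[Rmod R π (k + 1)] B →ₗ[Rmod R π (k + 1)] B,
      (∀ v, br' v v = 0) ∧
      (∀ x y z : B, br' (br' x y) z + br' (br' y z) x + br' (br' z x) y = 0) ∧
      (∀ x y : B, modk R π k B (br' x y) = brL (modk R π k B x) (modk R π k B y))) ↔
    (∃ form : Lbar R π k B →ₗ[Rmod R π (k + 1)] Lbar R π k B →ₗ[Rmod R π (k + 1)]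
        Lbar R π k B,
      (∀ v, form v v = 0) ∧
      ∀ x y z : Lbar R π k B,
        J x y z =
          brb x (form y z) - brb y (form x z) + brb z (form x y)
            - form (brb x y) z + form (brb x z) y - form (brb y z) x) := by
  classical
  have hmkq := Submodule.mkQ_surjective (piB R π k B)
  have key1 : ∀ (a : B) (w : Lbar R π k B),
      psi R π k B (brb (lam R π k B a) w) = br a (psi R π k B w) := by
    intro a w
    obtain ⟨b, rfl⟩ := hmkq w
    rw [← hbrb, psi_apply, psi_apply, map_smul]
  have hbranti := aux_antisym br halt
  constructor
  · rintro ⟨br', halt', hjac', hlift'⟩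
    set D := br' - br with hD
    have hDapp : ∀ x y, D x y = br' x y - br x y := fun x y => rfl
    have hDmem : ∀ x y, D x y ∈ pikB R π k B := by
      intro x y
      have h0 : modk R π k B (D x y) = 0 := by
        rw [hDapp, map_sub, hlift', hlift, sub_self]
      rwa [Submodule.mkQ_apply, Submodule.Quotient.mk_eq_zero] at h0
    have hDalt : ∀ v, D v v = 0 := fun v => by
      rw [hDapp, halt', halt, sub_self]
    have hDanti := aux_antisym D hDalt
    have hDleft : ∀ x ∈ piB R π k B, D x = 0 := by
      intro x hx
      rw [← SetLike.mem_coe, Submodule.coe_pointwise_smul, Set.mem_smul_set] at hx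
      obtain ⟨m, -, rfl⟩ := hx
      ext y
      rw [map_smul]
      simp only [LinearMap.smul_apply, LinearMap.zero_apply]
      exact kill_pikB R π k B _ (hDmem m y)
    have hDright : ∀ x, ∀ y ∈ piB R π k B, D x y = 0 := by
      intro x y hy
      rw [← SetLike.mem_coe, Submodule.coe_pointwise_smul, Set.mem_smul_set] at hy
      obtain ⟨m, -, rfl⟩ := hy
      rw [map_smul]
      exact kill_pikB R π k B _ (hDmem x m)
    have hDD : ∀ a b c : B, D (D a b) c = 0 := by
      intro a b c
      rw [hDleft _ (pikB_le_piB R π k B hk _ (hDmem a b))]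
      rfl
    set e := chiEquiv R π k B hπ with he
    set form0 := (biCodRestrict _ D hDmem).compr₂ e.symm.toLinearMap with hform0
    have hf1 : ∀ x ∈ piB R π k B, form0 x = 0 := by
      intro x hx
      ext y
      show e.symm (biCodRestrict _ D hDmem x y) = 0
      rw [show biCodRestrict _ D hDmem x y = 0 from
        Subtype.ext (by simp [hDleft x hx]), map_zero]
    have hf2 : ∀ x, ∀ y ∈ piB R π k B, form0 x y = 0 := by
      intro x y hy
      show e.symm (biCodRestrict _ D hDmem x y) = 0
      rw [show biCodRestrict _ D hDmem x y = 0 from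
        Subtype.ext (by simp [hDright x y hy]), map_zero]
    set form := biDescend (piB R π k B) form0 hf1 hf2 with hform
    have hform_apply : ∀ x y : B,
        form (lam R π k B x) (lam R π k B y) = form0 x y := fun x y => rfl
    have hpsiform : ∀ x y : B,
        psi R π k B (form (lam R π k B x) (lam R π k B y)) = D x y := by
      intro x y
      rw [hform_apply]
      show psi R π k B (e.symm (biCodRestrict _ D hDmem x y)) = D x y
      rw [he, chiEquiv_symm_val R π k B hπ]
      rfl
    refine ⟨form, ?_, ?_⟩
    · intro v
      obtain ⟨x, rfl⟩ := hmkq v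
      apply psi_injective R π k B hπ
      rw [hpsiform, hDalt, map_zero]
    · intro u v w
      obtain ⟨x, rfl⟩ := hmkq u
      obtain ⟨y, rfl⟩ := hmkq v
      obtain ⟨z, rfl⟩ := hmkq w
      apply psi_injective R π k B hπ
      rw [hJ]
      simp only [map_sub, map_add]
      rw [key1 x, key1 y, key1 z, hpsiform y z, hpsiform x y, hpsiform x z]
      rw [← hbrb x y, ← hbrb x z, ← hbrb y z]
      rw [hpsiform (br x y) z, hpsiform (br x z) y, hpsiform (br y z) x]
      -- expansion of Jacobi for br'
      have hexp : ∀ a b c : B,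
          br' (br' a b) c = br (br a b) c + br (D a b) c + D (br a b) c := by
        intro a b c
        have h1 : br' a b = br a b + D a b := by rw [hDapp]; abel
        have h2 : ∀ w c : B, br' w c = br w c + D w c := by
          intro w c; rw [hDapp]; abel
        rw [h2, h1, map_add, map_add]
        simp only [LinearMap.add_apply]
        rw [hDD]
        abel
      have hjace : br (br x y) z + br (br y z) x + br (br z x) y
          + (br (D x y) z + br (D y z) x + br (D z x) y)
          + (D (br x y) z + D (br y z) x + D (br z x) y) = 0 := by
        have := hjac' x y z
        rw [hexp x y z, hexp y z x, hexp z x y] at this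
        rw [← this]
        abel
      -- orient terms
      rw [hbranti x (D y z), hbranti y (D x z), hbranti z (D x y)]
      rw [hbranti x z, map_neg, LinearMap.neg_apply]
      rw [hDanti z x, map_neg, LinearMap.neg_apply] at hjace
      clear_value D form0 form e
      clear hpsiform hform_apply hform hf1 hf2 hform0 he hDmem hDleft hDright hDD hDapp hD
      rw [← sub_eq_zero]
      abel_nf at hjace ⊢
      exact hjace
  · rintro ⟨form, haltf, hform⟩
    obtain ⟨cmap, hc⟩ : ∃ c : B →ₗ[Rmod R π (k + 1)] B →ₗ[Rmod R π (k + 1)] B,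
        ∀ x y : B, c x y = psi R π k B (form (lam R π k B x) (lam R π k B y)) :=
      ⟨(((form.comp (lam R π k B)).compl₂ (lam R π k B)).compr₂ (psi R π k B)),
        fun x y => rfl⟩
    have hcmem : ∀ x y, cmap x y ∈ pikB R π k B := by
      intro x y; rw [hc]; exact psi_mem R π k B _
    have hcalt : ∀ v, cmap v v = 0 := by
      intro v; rw [hc, haltf, map_zero]
    have hcanti := aux_antisym cmap hcalt
    have hclam : ∀ x y : B, lam R π k B (cmap x y) = 0 := by
      intro x y
      rw [Submodule.mkQ_apply, Submodule.Quotient.mk_eq_zero]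
      exact pikB_le_piB R π k B hk _ (hcmem x y)
    have hcc : ∀ a b c : B, cmap (cmap a b) c = 0 := by
      intro a b c
      rw [hc, hclam, map_zero]
      simp
    refine ⟨br + cmap, ?_, ?_, ?_⟩
    · intro v
      simp only [LinearMap.add_apply]
      rw [halt, hcalt, add_zero]
    · intro x y z
      have hexp : ∀ a b c : B, (br + cmap) ((br + cmap) a b) c
          = br (br a b) c + br (cmap a b) c + cmap (br a b) c := by
        intro a b c
        simp only [LinearMap.add_apply, map_add]
        rw [hcc]
        abel
      rw [hexp x y z, hexp y z x, hexp z x y]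
      have hjac_br : br (br x y) z + br (br y z) x + br (br z x) y
          = br x (cmap y z) - br y (cmap x z) + br z (cmap x y)
            - cmap (br x y) z + cmap (br x z) y - cmap (br y z) x := by
        rw [← hJ x y z, hform]
        simp only [map_sub, map_add]
        rw [key1 x, key1 y, key1 z]
        rw [← hbrb x y, ← hbrb x z, ← hbrb y z]
        rw [← hc, ← hc, ← hc, ← hc, ← hc, ← hc]
      have hre : br (br x y) z + br (cmap x y) z + cmap (br x y) z
          + (br (br y z) x + br (cmap y z) x + cmap (br y z) x)
          + (br (br z x) y + br (cmap z x) y + cmap (br z x) y)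
          = (br (br x y) z + br (br y z) x + br (br z x) y)
            + (br (cmap x y) z + br (cmap y z) x + br (cmap z x) y)
            + (cmap (br x y) z + cmap (br y z) x + cmap (br z x) y) := by abel
      rw [hre, hjac_br]
      -- orient terms
      rw [hbranti x (cmap y z), hbranti y (cmap x z), hbranti z (cmap x y)]
      rw [hbranti x z, map_neg, LinearMap.neg_apply]
      rw [hcanti z x, map_neg, LinearMap.neg_apply]
      abel
    · intro x y
      simp only [LinearMap.add_apply, map_add]
      rw [hlift]
      have : modk R π k B (cmap x y) = 0 := by
        rw [Submodule.mkQ_apply, Submodule.Quotient.mk_eq_zero]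
        exact hcmem x y
      rw [this, add_zero]
end
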